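/- Let j ≥ 2 be an integer and z ∈ [0,1], and let (Z_n) be the BEC Bhattacharyya process started at z. Then for every integer m ≥ 0: Pr( Z_m ∈ [2^{−(2j+1)}, 2^{−j}] ) ≤ m·Pr( Z_m ∈ [2^{−j}, 3/4] ) + 2^{−m}. -/
import Mathlib

open MeasureTheory

/-- The BEC polar maps: `t₁(x) = x²`, `t₀(x) = 2x - x²`. -/
noncomputable def becT (b : Bool) (x : ℝ) : ℝ := if b then x ^ 2 else 2 * x - x ^ 2

/-- The BEC Bhattacharyya process started at `z`. -/
noncomputable def becZ (z : ℝ) : ℕ → (ℕ → Bool) → ℝ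
  | 0, _ => z
  | n + 1, ω => becT (ω n) (becZ z n ω)

section Aux

lemma becZ_zero (z : ℝ) (ω : ℕ → Bool) : becZ z 0 ω = z := rfl

lemma becZ_succ (z : ℝ) (n : ℕ) (ω : ℕ → Bool) :
    becZ z (n + 1) ω = becT (ω n) (becZ z n ω) := rfl

lemma becT_false (x : ℝ) : becT false x = 2 * x - x ^ 2 := by simp [becT]

lemma becT_true (x : ℝ) : becT true x = x ^ 2 := by simp [becT]

lemma becT_mem {x : ℝ} (hx : x ∈ Set.Icc (0:ℝ) 1) (b : Bool) : becT b x ∈ Set.Icc (0:ℝ) 1 := by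
  obtain ⟨h0, h1⟩ := hx
  cases b
  · rw [becT_false]; constructor <;> nlinarith
  · rw [becT_true]; constructor <;> nlinarith

lemma becT_le_false {x : ℝ} (hx : x ∈ Set.Icc (0:ℝ) 1) (b : Bool) :
    becT b x ≤ becT false x := by
  obtain ⟨h0, h1⟩ := hx
  cases b
  · exact le_refl _
  · rw [becT_true, becT_false]; nlinarith

lemma becT_false_mono {x y : ℝ} (hx : 0 ≤ x) (hxy : x ≤ y) (hy : y ≤ 1) :
    becT false x ≤ becT false y := by
  rw [becT_false, becT_false]; nlinarith

lemma becZ_mem {x : ℝ} (hx : x ∈ Set.Icc (0:ℝ) 1) (s : ℕ) (ω : ℕ → Bool) :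
    becZ x s ω ∈ Set.Icc (0:ℝ) 1 := by
  induction s with
  | zero => exact hx
  | succ n ih => rw [becZ_succ]; exact becT_mem ih _

lemma becZ_congr {x : ℝ} {s : ℕ} {ω ω' : ℕ → Bool} (h : ∀ t, t < s → ω t = ω' t) :
    becZ x s ω = becZ x s ω' := by
  induction s with
  | zero => rfl
  | succ n ih =>
      rw [becZ_succ, becZ_succ, h n (Nat.lt_succ_self n),
        ih (fun t ht => h t (ht.trans (Nat.lt_succ_self n)))]

lemma becZ_add (x : ℝ) (i s : ℕ) (ω : ℕ → Bool) :
    becZ x (i + s) ω = becZ (becZ x i ω) s (fun t => ω (i + t)) := by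
  induction s with
  | zero => rfl
  | succ n ih => rw [← Nat.add_assoc, becZ_succ, becZ_succ, ih]

lemma becZ_succ_left (x : ℝ) (s : ℕ) (ω : ℕ → Bool) :
    becZ x (s + 1) ω = becZ (becT (ω 0) x) s (fun t => ω (t + 1)) := by
  have h := becZ_add x 1 s ω
  rw [Nat.add_comm 1 s] at h
  rw [h, becZ_succ, becZ_zero]
  exact becZ_congr (fun t _ => by rw [Nat.add_comm 1 t])

lemma becZ_le_max {x : ℝ} (hx : x ∈ Set.Icc (0:ℝ) 1) (s : ℕ) (ω : ℕ → Bool) :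
    becZ x s ω ≤ 1 - (1 - x) ^ 2 ^ s := by
  induction s with
  | zero => rw [becZ_zero, pow_zero, pow_one]; linarith
  | succ n ih =>
      have hmem := becZ_mem hx n ω
      obtain ⟨hu0, hu1⟩ := hmem
      have hx0 := hx.1
      have hx1 := hx.2
      have hbase0 : (0:ℝ) ≤ 1 - x := by linarith
      have hU1 : 1 - (1 - x) ^ 2 ^ n ≤ 1 := by
        have : (0:ℝ) ≤ (1 - x) ^ 2 ^ n := pow_nonneg hbase0 _
        linarith
      rw [becZ_succ]
      calc becT (ω n) (becZ x n ω) ≤ becT false (becZ x n ω) :=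
            becT_le_false (becZ_mem hx n ω) _
        _ ≤ becT false (1 - (1 - x) ^ 2 ^ n) := becT_false_mono hu0 ih hU1
        _ = 1 - (1 - x) ^ 2 ^ (n + 1) := by
            have hps : (1 - x) ^ 2 ^ (n + 1) = ((1 - x) ^ 2 ^ n) ^ 2 := by
              rw [← pow_mul, pow_succ]
            rw [becT_false, hps]
            ring
end Aux

section Reach

variable {c : ℝ} (hc0 : 0 < c) (hc14 : c ≤ 1/4)

/-- From inside `[c, 3/4]` one can stay inside for any number of steps. -/
lemma stayB (hc0 : 0 < c) (hc14 : c ≤ 1/4) :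
    ∀ (s : ℕ) {y : ℝ}, y ∈ Set.Icc c (3/4) → ∃ ω : ℕ → Bool,
      becZ y s ω ∈ Set.Icc c (3/4) := by
  intro s
  induction s with
  | zero => intro y hy; exact ⟨fun _ => false, hy⟩
  | succ n ih =>
      intro y hy
      obtain ⟨hyc, hy34⟩ := hy
      by_cases hhalf : y ≤ 1/2
      · have hy' : becT false y ∈ Set.Icc c (3/4) := by
          rw [becT_false]; constructor <;> nlinarith
        obtain ⟨ω', hω'⟩ := ih hy'
        refine ⟨fun t => if t = 0 then false else ω' (t - 1), ?_⟩
        rw [becZ_succ_left]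
        simpa using hω'
      · have hy' : becT true y ∈ Set.Icc c (3/4) := by
          rw [becT_true]; constructor <;> nlinarith
        obtain ⟨ω', hω'⟩ := ih hy'
        refine ⟨fun t => if t = 0 then true else ω' (t - 1), ?_⟩
        rw [becZ_succ_left]
        simpa using hω'

/-- If the all-zeros iterate reaches height `c`, then `[c,3/4]` is reachable in exactly `s`
steps. -/
lemma reachB (hc0 : 0 < c) (hc14 : c ≤ 1/4) :
    ∀ (s : ℕ) {y : ℝ}, y ∈ Set.Icc (0:ℝ) (3/4) → c ≤ 1 - (1 - y) ^ 2 ^ s →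
      ∃ ω : ℕ → Bool, becZ y s ω ∈ Set.Icc c (3/4) := by
  intro s
  induction s with
  | zero =>
      intro y hy hr
      rw [pow_zero, pow_one] at hr
      refine ⟨fun _ => false, ?_⟩
      rw [becZ_zero]
      exact ⟨by linarith, hy.2⟩
  | succ n ih =>
      intro y hy hr
      by_cases hcy : c ≤ y
      · exact stayB hc0 hc14 (n+1) ⟨hcy, hy.2⟩
      · push_neg at hcy
        have hy0 := hy.1
        have hy' : becT false y ∈ Set.Icc (0:ℝ) (3/4) := by
          rw [becT_false]; constructor <;> nlinarith
        have hr' : c ≤ 1 - (1 - becT false y) ^ 2 ^ n := by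
          have h1 : 1 - becT false y = (1 - y) ^ 2 := by rw [becT_false]; ring
          have h2 : ((1 - y) ^ 2) ^ 2 ^ n = (1 - y) ^ 2 ^ (n + 1) := by
            rw [← pow_mul, pow_succ, Nat.mul_comm]
          rw [h1, h2]
          exact hr
        obtain ⟨ω', hω'⟩ := ih hy' hr'
        refine ⟨fun t => if t = 0 then false else ω' (t - 1), ?_⟩
        rw [becZ_succ_left]
        simpa using hω'


/-- The arithmetic contradiction at the heart of the key lemma. -/
lemma arith_contra {c y : ℝ} (hc0 : 0 < c) (hc14 : c ≤ 1/4) (hy0 : 0 ≤ y) (hyc : y < c)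
    (N : ℕ) (hN1 : 1 ≤ (N:ℝ))
    (hu2 : 1 - c < ((1 - y) ^ N) ^ 2)
    (huvN : (1 - y^2) ^ N ≤ 1 - c^2/2) : False := by
  have hy1 : y < 1 := by linarith
  have h1y0 : (0:ℝ) ≤ 1 - y := by linarith
  have hu0 : (0:ℝ) ≤ (1 - y) ^ N := pow_nonneg h1y0 _
  have huv : ((1 - y) ^ N) * ((1 + y) ^ N) ≤ 1 - c^2/2 := by
    have h1 : ((1 - y) ^ N) * ((1 + y) ^ N) = (1 - y^2) ^ N := by
      rw [← mul_pow]; ring_nf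
    rw [h1]; exact huvN
  have hA1 : (1 + 2*y) ^ N * (1 - y) ^ N ≤ (1 + y) ^ N := by
    rw [← mul_pow]
    apply pow_le_pow_left₀ (by nlinarith) (by nlinarith)
  have hber1 : 1 + (N:ℝ) * (2*y) ≤ (1 + 2*y) ^ N := by
    have := one_add_mul_le_pow (a := 2*y) (by linarith) N
    linarith
  have hber2 : 1 - (N:ℝ) * y^2 ≤ (1 - y^2) ^ N := by
    have := one_add_mul_le_pow (a := -(y^2)) (by nlinarith) N
    calc 1 - (N:ℝ) * y^2 = 1 + (N:ℝ) * (-(y^2)) := by ring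
      _ ≤ (1 + -(y^2)) ^ N := this
      _ = (1 - y^2) ^ N := by ring_nf
  have hQy2 : c^2/2 ≤ (N:ℝ) * y^2 := by linarith
  have hNy0 : (0:ℝ) ≤ (N:ℝ) * y := mul_nonneg (by linarith) hy0
  have hmain : (1 + (N:ℝ) * (2*y)) * (1 - c) < 1 - c^2/2 := by
    have hpos : (0:ℝ) < 1 + (N:ℝ) * (2*y) := by nlinarith [hNy0]
    have step1 : (1 + (N:ℝ) * (2*y)) * (1 - c) < (1 + (N:ℝ) * (2*y)) * (((1 - y) ^ N) ^ 2) :=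
      mul_lt_mul_of_pos_left hu2 hpos
    have step2 : (1 + (N:ℝ) * (2*y)) * (((1 - y) ^ N) ^ 2)
        ≤ (1 + 2*y) ^ N * (((1 - y) ^ N) ^ 2) :=
      mul_le_mul_of_nonneg_right hber1 (by positivity)
    have step3 : (1 + 2*y) ^ N * (((1 - y) ^ N) ^ 2) ≤ (1 + y) ^ N * (1 - y) ^ N := by
      have heq : (1 + 2*y) ^ N * (((1 - y) ^ N) ^ 2)
          = ((1 + 2*y) ^ N * (1 - y) ^ N) * (1 - y) ^ N := by ring
      rw [heq]
      exact mul_le_mul_of_nonneg_right hA1 hu0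
    have step4 : (1 + y) ^ N * (1 - y) ^ N ≤ 1 - c^2/2 := by
      calc (1 + y) ^ N * (1 - y) ^ N = ((1 - y) ^ N) * ((1 + y) ^ N) := by ring
        _ ≤ 1 - c^2/2 := huv
    linarith
  have h2Nyc : (N:ℝ) * y * c ≤ (N:ℝ) * y * (1/4) := mul_le_mul_of_nonneg_left hc14 hNy0
  have hNy : (N:ℝ) * y < (2/3) * c := by nlinarith [hmain, h2Nyc, hc0, sq_nonneg c]
  have hyNy : y ≤ (N:ℝ) * y := by
    have := mul_le_mul_of_nonneg_right hN1 hy0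
    linarith
  have hylt : y < (2/3) * c := lt_of_le_of_lt hyNy hNy
  have hle23 : ((N:ℝ) * y) * y ≤ ((2/3) * c) * y := mul_le_mul_of_nonneg_right hNy.le hy0
  have hNyy : (N:ℝ) * y^2 = ((N:ℝ) * y) * y := by ring
  have hfin : ((2/3) * c) * y < ((2/3) * c) * ((2/3) * c) :=
    mul_lt_mul_of_pos_left hylt (by linarith)
  nlinarith [hQy2, hle23, hNyy, hfin, hc0, sq_nonneg c]

set_option maxHeartbeats 1000000 in
/-- Key lemma: if no word of length `k` reaches `B = [c,3/4]`, then any word landing in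
`A = [c²/2, c]` is all-zero. -/
lemma noTrue (hc0 : 0 < c) (hc14 : c ≤ 1/4) {x : ℝ} (hx : x ∈ Set.Icc (0:ℝ) 1) (k : ℕ)
    (hM : ∀ ω : ℕ → Bool, becZ x k ω ∉ Set.Icc c (3/4))
    {ω : ℕ → Bool} (hA : becZ x k ω ∈ Set.Icc (c^2/2) c)
    {n : ℕ} (hn : n < k) : ω n = false := by
  by_contra hne
  have hωn : ω n = true := by
    cases hb : ω n
    · exact absurd hb hne
    · rfl
  -- no prefix value lies in `[c, 3/4]`
  have T1 : ∀ i, i ≤ k → becZ x i ω ∉ Set.Icc c (3/4) := by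
    intro i hik hBi
    obtain ⟨ω₂, hω₂⟩ := stayB hc0 hc14 (k - i) hBi
    set ωs : ℕ → Bool := fun t => if t < i then ω t else ω₂ (t - i) with hωs
    apply hM ωs
    have hik' : i + (k - i) = k := Nat.add_sub_cancel' hik
    have h1 : becZ x i ωs = becZ x i ω :=
      becZ_congr (fun t ht => by simp [hωs, ht])
    have h2 : (fun t => ωs (i + t)) = ω₂ := by
      funext t
      simp [hωs, Nat.add_sub_cancel_left]
    rw [← hik', becZ_add, h1, h2]
    exact hω₂
  have hxk0 : becZ x k ω ≤ c := hA.2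
  have hc34 : c ≤ 3/4 := by linarith
  -- once above 3/4, stay above 3/4
  have T2 : ∀ d i, i + d = k → 3/4 < becZ x i ω → 3/4 < becZ x k ω := by
    intro d
    induction d with
    | zero =>
        intro i hik h
        rw [Nat.add_zero] at hik
        subst hik
        exact h
    | succ m ihm =>
        intro i hik h
        have hi1 : (i + 1) + m = k := by omega
        apply ihm (i + 1) hi1
        have hu := becZ_mem hx i ω
        obtain ⟨hu0, hu1⟩ := hu
        rw [becZ_succ]
        cases hb : ω i
        · rw [becT_false]; nlinarith
        · rw [becT_true]
          have h916 : (9:ℝ)/16 < (becZ x i ω)^2 := by nlinarith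
          have hnotB := T1 (i + 1) (by omega)
          rw [becZ_succ, hb, becT_true] at hnotB
          by_contra hle
          push_neg at hle
          exact hnotB ⟨by nlinarith, hle⟩
  -- every prefix value is `< c`
  have T3 : ∀ i, i ≤ k → becZ x i ω < c := by
    intro i hik
    have hnot := T1 i hik
    by_contra hge
    push_neg at hge
    have h34 : 3/4 < becZ x i ω := by
      rcases lt_or_ge (3/4 : ℝ) (becZ x i ω) with h | h
      · exact h
      · exact absurd ⟨hge, h⟩ hnot
    have := T2 (k - i) i (Nat.add_sub_cancel' hik) h34
    linarith
  set y := becZ x n ω with hy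
  have hy0 : 0 ≤ y := (becZ_mem hx n ω).1
  have hyc : y < c := T3 n hn.le
  set r := k - (n + 1) with hr
  have hkr : (n + 1) + r = k := by omega
  -- upper bound on reachability from `y²`
  have h3 : c^2/2 ≤ 1 - (1 - y^2) ^ 2 ^ r := by
    have hsplit : becZ x k ω = becZ (becZ x (n+1) ω) r (fun t => ω ((n+1) + t)) := by
      rw [← hkr, becZ_add]
    have hstep : becZ x (n+1) ω = y^2 := by
      rw [becZ_succ, hωn, becT_true]
    have hy2mem : y^2 ∈ Set.Icc (0:ℝ) 1 := by
      constructor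
      · positivity
      · nlinarith
    have hle := becZ_le_max hy2mem r (fun t => ω ((n+1) + t))
    have := hA.1
    rw [hsplit, hstep] at this
    linarith
  -- B not reachable from y in r+1 steps
  have h2 : 1 - c < (1 - y) ^ 2 ^ (r + 1) := by
    by_contra hle
    push_neg at hle
    have hrB : c ≤ 1 - (1 - y) ^ 2 ^ (r + 1) := by linarith
    have hymem : y ∈ Set.Icc (0:ℝ) (3/4) := ⟨hy0, by linarith⟩
    obtain ⟨ω₂, hω₂⟩ := reachB hc0 hc14 (r + 1) hymem hrB
    set ωs : ℕ → Bool := fun t => if t < n then ω t else ω₂ (t - n) with hωs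
    apply hM ωs
    have hk' : n + (r + 1) = k := by omega
    have h1 : becZ x n ωs = becZ x n ω :=
      becZ_congr (fun t ht => by simp [hωs, ht])
    have h2' : (fun t => ωs (n + t)) = ω₂ := by
      funext t
      simp [hωs, Nat.add_sub_cancel_left]
    rw [← hk', becZ_add, h1, ← hy, h2']
    exact hω₂
  -- final arithmetic contradiction
  have hy1 : y < 1 := by linarith
  set N : ℕ := 2 ^ r with hN
  have hN1 : 1 ≤ (N:ℝ) := by
    have : 1 ≤ N := Nat.one_le_two_pow
    exact_mod_cast this
  have hu2 : 1 - c < ((1 - y) ^ N) ^ 2 := by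
    have hpe : (1 - y) ^ 2 ^ (r + 1) = ((1 - y) ^ N) ^ 2 := by
      rw [← pow_mul, pow_succ]
    linarith [h2.trans_eq hpe]
  have huvN : (1 - y^2) ^ N ≤ 1 - c^2/2 := by linarith
  exact arith_contra hc0 hc14 hy0 hyc N hN1 hu2 huvN

end Reach

section Count

attribute [local instance] Classical.propDecidable

/-- Extend a finite word to an infinite one by zeros. -/
def extendW (m : ℕ) (v : Fin m → Bool) : ℕ → Bool :=
  fun t => if h : t < m then v ⟨t, h⟩ else false

/-- Number of words of length `k` from `x` landing in `S`. -/
noncomputable def cnt (S : Set ℝ) : ℕ → ℝ → ℕ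
  | 0, x => if x ∈ S then 1 else 0
  | k + 1, x => cnt S k (becT false x) + cnt S k (becT true x)

lemma becZ_extend_cons (x : ℝ) (m : ℕ) (b : Bool) (w : Fin m → Bool) :
    becZ x (m + 1) (extendW (m + 1) (Fin.cons b w)) = becZ (becT b x) m (extendW m w) := by
  rw [becZ_succ_left]
  have h0 : extendW (m + 1) (Fin.cons b w) 0 = b := by
    simp [extendW]
  rw [h0]
  exact becZ_congr (fun t ht => by
    have h1 : t + 1 < m + 1 := by omega
    simp only [extendW, dif_pos h1, dif_pos ht]
    have : (⟨t + 1, h1⟩ : Fin (m + 1)) = Fin.succ ⟨t, ht⟩ := rfl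
    rw [this, Fin.cons_succ])

lemma cnt_card (S : Set ℝ) : ∀ (m : ℕ) (x : ℝ),
    (Finset.univ.filter (fun v : Fin m → Bool => becZ x m (extendW m v) ∈ S)).card
      = cnt S m x := by
  intro m
  induction m with
  | zero =>
      intro x
      by_cases hx : x ∈ S
      · rw [Finset.filter_true_of_mem (fun v _ => by rw [becZ_zero]; exact hx)]
        simp [cnt, hx]
      · rw [Finset.filter_false_of_mem (fun v _ => by rw [becZ_zero]; exact hx)]
        simp [cnt, hx]
  | succ m ih =>
      intro x
      rw [Finset.card_filter]
      rw [← Equiv.sum_comp (Fin.consEquiv (fun _ : Fin (m+1) => Bool))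
        (fun v => if becZ x (m+1) (extendW (m+1) v) ∈ S then 1 else 0)]
      rw [Fintype.sum_prod_type]
      have hterm : ∀ (b : Bool) (w : Fin m → Bool),
          (if becZ x (m+1) (extendW (m+1) ((Fin.consEquiv _) (b, w))) ∈ S then 1 else 0)
            = (if becZ (becT b x) m (extendW m w) ∈ S then 1 else 0) := by
        intro b w
        have : (Fin.consEquiv (fun _ : Fin (m+1) => Bool)) (b, w) = Fin.cons b w := rfl
        rw [this, becZ_extend_cons]
      calc (∑ b : Bool, ∑ w : Fin m → Bool,
              if becZ x (m+1) (extendW (m+1) ((Fin.consEquiv _) (b, w))) ∈ S then 1 else 0)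
          = ∑ b : Bool, ∑ w : Fin m → Bool,
              (if becZ (becT b x) m (extendW m w) ∈ S then 1 else 0) := by
            refine Finset.sum_congr rfl (fun b _ => Finset.sum_congr rfl (fun w _ => hterm b w))
        _ = ∑ b : Bool, cnt S m (becT b x) := by
            refine Finset.sum_congr rfl (fun b _ => ?_)
            rw [← Finset.card_filter]
            exact ih (becT b x)
        _ = cnt S (m+1) x := by
            rw [Fintype.sum_bool]
            show cnt S m (becT true x) + cnt S m (becT false x) = cnt S (m+1) x
            rw [cnt, Nat.add_comm]

/-- The main counting estimate. -/
lemma cnt_eq_zero {S : Set ℝ} {m : ℕ} {x : ℝ} (h : cnt S m x = 0) :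
    ∀ ω : ℕ → Bool, becZ x m ω ∉ S := by
  intro ω hω
  have h0 := (cnt_card S m x).trans h
  rw [Finset.card_eq_zero] at h0
  have hv : (fun i : Fin m => ω i) ∈ (∅ : Finset (Fin m → Bool)) := by
    rw [← h0, Finset.mem_filter]
    refine ⟨Finset.mem_univ _, ?_⟩
    have he : becZ x m (extendW m (fun i : Fin m => ω i)) = becZ x m ω :=
      becZ_congr (fun t ht => by simp [extendW, dif_pos ht])
    rwa [he]
  exact absurd hv (Finset.notMem_empty _)

lemma cnt_le_one {S : Set ℝ} {m : ℕ} {x : ℝ}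
    (h : ∀ v : Fin m → Bool, becZ x m (extendW m v) ∈ S → v = fun _ => false) :
    cnt S m x ≤ 1 := by
  rw [← cnt_card]
  apply Finset.card_le_one.mpr
  intro v hv v' hv'
  rw [Finset.mem_filter] at hv hv'
  rw [h v hv.2, h v' hv'.2]

lemma cnt_le {c : ℝ} (hc0 : 0 < c) (hc14 : c ≤ 1/4) :
    ∀ (k : ℕ) (x : ℝ), x ∈ Set.Icc (0:ℝ) 1 →
      cnt (Set.Icc (c^2/2) c) k x ≤ k * cnt (Set.Icc c (3/4)) k x + 1 := by
  intro k
  induction k with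
  | zero =>
      intro x _
      rw [cnt]
      split <;> omega
  | succ k ih =>
      intro x hx
      by_cases hB : cnt (Set.Icc c (3/4)) (k+1) x = 0
      · have hno := cnt_eq_zero hB
        have hA1 : cnt (Set.Icc (c^2/2) c) (k+1) x ≤ 1 := by
          apply cnt_le_one
          intro v hv
          funext i
          have hfalse := noTrue hc0 hc14 hx (k+1) hno hv (n := (i : ℕ)) i.isLt
          rwa [extendW, dif_pos i.isLt, Fin.eta] at hfalse
        omega
      · have hB1 : 1 ≤ cnt (Set.Icc c (3/4)) (k+1) x := Nat.one_le_iff_ne_zero.mpr hB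
        have h0 := ih (becT false x) (becT_mem hx false)
        have h1 := ih (becT true x) (becT_mem hx true)
        have hAe : cnt (Set.Icc (c^2/2) c) (k+1) x
            = cnt (Set.Icc (c^2/2) c) k (becT false x) + cnt (Set.Icc (c^2/2) c) k (becT true x) := rfl
        have hBe : cnt (Set.Icc c (3/4)) (k+1) x
            = cnt (Set.Icc c (3/4)) k (becT false x) + cnt (Set.Icc c (3/4)) k (becT true x) := rfl
        rw [hAe, hBe]
        rw [hBe] at hB1
        have e : (k+1) * (cnt (Set.Icc c (3/4)) k (becT false x) + cnt (Set.Icc c (3/4)) k (becT true x))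
            = k * cnt (Set.Icc c (3/4)) k (becT false x) + k * cnt (Set.Icc c (3/4)) k (becT true x)
              + (cnt (Set.Icc c (3/4)) k (becT false x) + cnt (Set.Icc c (3/4)) k (becT true x)) := by
          ring
        have e2 : k * (cnt (Set.Icc c (3/4)) k (becT false x) + cnt (Set.Icc c (3/4)) k (becT true x))
            = k * cnt (Set.Icc c (3/4)) k (becT false x) + k * cnt (Set.Icc c (3/4)) k (becT true x) := by
          ring
        omega

end Count

/-- `μ` is the i.i.d. Bernoulli(1/2) product measure on `{0,1}^ℕ`,
characterized by its values on cylinder sets. -/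
def IsBernoulliHalf (μ : Measure (ℕ → Bool)) : Prop :=
  ∀ (n : ℕ) (b : Fin n → Bool), μ {ω | ∀ i : Fin n, ω i = b i} = (2 : ENNReal)⁻¹ ^ n

section MeasurePart

attribute [local instance] Classical.propDecidable

lemma measure_becZ {μ : Measure (ℕ → Bool)} (hμ : IsBernoulliHalf μ) (z : ℝ) (m : ℕ)
    (S : Set ℝ) :
    μ {ω | becZ z m ω ∈ S} = (cnt S m z : ENNReal) * (2 : ENNReal)⁻¹ ^ m := by
  classical
  set F := Finset.univ.filter (fun v : Fin m → Bool => becZ z m (extendW m v) ∈ S) with hF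
  have hE : {ω : ℕ → Bool | becZ z m ω ∈ S}
      = ⋃ v ∈ F, {ω : ℕ → Bool | ∀ i : Fin m, ω i = v i} := by
    ext ω
    simp only [Set.mem_setOf_eq, Set.mem_iUnion, exists_prop]
    constructor
    · intro h
      refine ⟨fun i => ω i, ?_, fun i => rfl⟩
      rw [hF, Finset.mem_filter]
      refine ⟨Finset.mem_univ _, ?_⟩
      have he : becZ z m (extendW m (fun i : Fin m => ω i)) = becZ z m ω :=
        becZ_congr (fun t ht => by simp [extendW, dif_pos ht])
      rwa [he]
    · rintro ⟨v, hvF, hv⟩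
      rw [hF, Finset.mem_filter] at hvF
      have he : becZ z m ω = becZ z m (extendW m v) :=
        becZ_congr (fun t ht => by
          have := hv ⟨t, ht⟩
          simp only [extendW, dif_pos ht]
          exact this)
      rw [he]
      exact hvF.2
  have hd : (↑F : Set (Fin m → Bool)).PairwiseDisjoint
      (fun v => {ω : ℕ → Bool | ∀ i : Fin m, ω i = v i}) := by
    intro v _ v' _ hne
    refine Set.disjoint_left.mpr ?_
    intro ω h1 h2
    exact hne (funext fun i => (h1 i).symm.trans (h2 i))
  have hmeas : ∀ v ∈ F, MeasurableSet {ω : ℕ → Bool | ∀ i : Fin m, ω i = v i} := by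
    intro v _
    have hset : {ω : ℕ → Bool | ∀ i : Fin m, ω i = v i}
        = ⋂ i : Fin m, (fun ω : ℕ → Bool => ω (i:ℕ)) ⁻¹' {v i} := by
      ext ω
      simp [Set.mem_iInter, Set.mem_preimage]
    rw [hset]
    exact MeasurableSet.iInter fun i =>
      (measurable_pi_apply (i:ℕ)) (measurableSet_singleton (v i))
  rw [hE, measure_biUnion_finset hd hmeas]
  rw [Finset.sum_congr rfl (fun v _ => hμ m v), Finset.sum_const, nsmul_eq_mul, hF, cnt_card]

end MeasurePart

theorem stmt13 (μ : Measure (ℕ → Bool)) [IsProbabilityMeasure μ] (hμ : IsBernoulliHalf μ)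
    (j : ℕ) (hj : 2 ≤ j) (z : ℝ) (hz : z ∈ Set.Icc (0:ℝ) 1) :
    ∀ m : ℕ,
      (μ {ω | becZ z m ω ∈ Set.Icc (((1:ℝ)/2) ^ (2 * j + 1)) (((1:ℝ)/2) ^ j)}).toReal ≤
        (m : ℝ) * (μ {ω | becZ z m ω ∈ Set.Icc (((1:ℝ)/2) ^ j) (3/4)}).toReal +
          ((1:ℝ)/2) ^ m := by
  intro m
  set c : ℝ := ((1:ℝ)/2) ^ j with hc
  have hc0 : (0:ℝ) < c := by rw [hc]; positivity
  have hc14 : c ≤ 1/4 := by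
    rw [hc]
    calc ((1:ℝ)/2) ^ j ≤ ((1:ℝ)/2) ^ 2 :=
          pow_le_pow_of_le_one (by norm_num) (by norm_num) hj
      _ = 1/4 := by norm_num
  have hAset : Set.Icc (((1:ℝ)/2) ^ (2 * j + 1)) c = Set.Icc (c^2/2) c := by
    have h1 : c ^ 2 = ((1:ℝ)/2) ^ (2 * j) := by
      rw [hc, ← pow_mul, Nat.mul_comm]
    have h2 : ((1:ℝ)/2) ^ (2 * j + 1) = c^2/2 := by
      rw [pow_succ, h1]; ring
    rw [h2]
  rw [hAset, measure_becZ hμ z m (Set.Icc (c^2/2) c), measure_becZ hμ z m (Set.Icc c (3/4))]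
  have hcnt := cnt_le hc0 hc14 m z hz
  have h2r : ((2:ENNReal)⁻¹ ^ m).toReal = ((1:ℝ)/2) ^ m := by
    rw [ENNReal.toReal_pow, ENNReal.toReal_inv]
    norm_num
  rw [ENNReal.toReal_mul, ENNReal.toReal_mul, h2r, ENNReal.toReal_natCast,
    ENNReal.toReal_natCast]
  have hpow : (0:ℝ) ≤ ((1:ℝ)/2) ^ m := by positivity
  have hcast : ((cnt (Set.Icc (c^2/2) c) m z : ℝ)) ≤
      (m:ℝ) * (cnt (Set.Icc c (3/4)) m z : ℝ) + 1 := by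
    exact_mod_cast hcnt
  have hmul := mul_le_mul_of_nonneg_right hcast hpow
  nlinarith [hmul]
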